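/- arXiv:1304.6140 — 2 statements merged into one kernel-verified Lean document; each statement's English description precedes it below -/
import Mathlib

section
/- For all x, y ∈ ℝ, t > 0, ε > 0, and exponents 0 ≤ δ ≤ p, the Gaussian kernel satisfies |ψ_{t+ε}^x(y) − ψ_t^x(y)|^p ≤ (ε t^{-3/2})^δ ((ψ_{t+ε}^x(y))^{p−δ} + (ψ_t^x(y))^{p−δ}). -/
open MeasureTheory Real

/-- Gaussian (heat) kernel ψ_t^x(y) = (2πt)^{-1/2} exp(-(y-x)²/(2t)). -/
noncomputable def psi (t x y : ℝ) : ℝ :=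
  (2 * Real.pi * t) ^ (-(1/2) : ℝ) * Real.exp (-(y - x) ^ 2 / (2 * t))

lemma psi_pos (x y : ℝ) {t : ℝ} (ht : 0 < t) : 0 < psi t x y := by
  unfold psi
  have h : 0 < 2 * Real.pi * t := by positivity
  positivity

lemma psi_hasDerivAt (x y : ℝ) {s : ℝ} (hs : 0 < s) :
    HasDerivAt (fun u => psi u x y)
      (psi s x y * ((y - x) ^ 2 / (2 * s ^ 2) - 1 / (2 * s))) s := by
  have h2πs : 0 < 2 * Real.pi * s := by positivity
  have h1 : HasDerivAt (fun u : ℝ => 2 * Real.pi * u) (2 * Real.pi) s := by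
    simpa using (hasDerivAt_id s).const_mul (2 * Real.pi)
  have h2 : HasDerivAt (fun u : ℝ => (2 * Real.pi * u) ^ (-(1/2) : ℝ))
      (2 * Real.pi * (-(1/2) : ℝ) * (2 * Real.pi * s) ^ ((-(1/2) : ℝ) - 1)) s :=
    h1.rpow_const (Or.inl h2πs.ne')
  have h3 : HasDerivAt (fun u : ℝ => -(y - x) ^ 2 / (2 * u))
      ((y - x) ^ 2 / (2 * s ^ 2)) s := by
    have hinv : HasDerivAt (fun u : ℝ => u⁻¹) (-(s ^ 2)⁻¹) s := hasDerivAt_inv hs.ne'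
    have heq : (fun u : ℝ => -(y - x) ^ 2 / (2 * u)) = fun u => -(y - x) ^ 2 / 2 * u⁻¹ := by
      funext u
      rw [div_eq_mul_inv, mul_inv, div_eq_mul_inv]
      ring
    have := hinv.const_mul (-(y - x) ^ 2 / 2)
    rw [heq]
    convert this using 1
    · rfl
    · rfl
    field_simp
  have h4 : HasDerivAt (fun u : ℝ => Real.exp (-(y - x) ^ 2 / (2 * u)))
      (Real.exp (-(y - x) ^ 2 / (2 * s)) * ((y - x) ^ 2 / (2 * s ^ 2))) s := by
    simpa [mul_comm] using h3.exp
  have h5 := h2.mul h4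
  convert h5 using 1
  · rfl
  · rfl
  · rfl
  unfold psi
  have hsplit : (2 * Real.pi * s) ^ ((-(1/2) : ℝ) - 1)
      = (2 * Real.pi * s) ^ (-(1/2) : ℝ) * (2 * Real.pi * s)⁻¹ := by
    rw [Real.rpow_sub h2πs, Real.rpow_one, div_eq_mul_inv]
  rw [hsplit]
  field_simp
  ring

lemma deriv_bound (x y : ℝ) {s : ℝ} (hs : 0 < s) :
    |psi s x y * ((y - x) ^ 2 / (2 * s ^ 2) - 1 / (2 * s))| ≤ s ^ (-(3/2) : ℝ) := by
  set z : ℝ := (y - x) ^ 2 with hzdef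
  have hz : 0 ≤ z := sq_nonneg _
  set E : ℝ := Real.exp (-z / (2 * s)) with hEdef
  have hE0 : 0 < E := Real.exp_pos _
  have hE1 : E ≤ 1 := by
    rw [hEdef]
    apply Real.exp_le_one_iff.mpr
    have : 0 ≤ z / (2 * s) := by positivity
    rw [neg_div]
    linarith
  have hzE : z * E ≤ 2 * s := by
    have h1 : z / (2 * s) ≤ Real.exp (z / (2 * s)) := by
      have := Real.add_one_le_exp (z / (2 * s))
      linarith
    have h2 : z ≤ 2 * s * Real.exp (z / (2 * s)) := by
      rw [div_le_iff₀ (by positivity : (0:ℝ) < 2 * s)] at h1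
      linarith [mul_comm (Real.exp (z / (2 * s))) (2 * s)]
    have hEeq : E = (Real.exp (z / (2 * s)))⁻¹ := by
      rw [hEdef, ← Real.exp_neg, neg_div]
    rw [hEeq]
    rw [mul_inv_le_iff₀' (Real.exp_pos _)]
    linarith [mul_comm (2 * s) (Real.exp (z / (2 * s)))]
  set c : ℝ := (2 * Real.pi) ^ (-(1/2) : ℝ) with hcdef
  have hc0 : 0 < c := by rw [hcdef]; positivity
  set a : ℝ := s ^ (-(1/2) : ℝ) with hadef
  have ha0 : 0 < a := by rw [hadef]; positivity
  have hmul : (2 * Real.pi * s) ^ (-(1/2) : ℝ) = c * a :=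
    Real.mul_rpow (by positivity) hs.le
  have hc23 : c ≤ 2 / 3 := by
    have hsq : Real.sqrt (2 * Real.pi) = (2 * Real.pi) ^ ((1:ℝ)/2) :=
      Real.sqrt_eq_rpow _
    have h32 : (3/2 : ℝ) ≤ Real.sqrt (2 * Real.pi) := by
      rw [show (3/2 : ℝ) = Real.sqrt ((3/2) ^ 2) from (Real.sqrt_sq (by norm_num)).symm]
      apply Real.sqrt_le_sqrt
      nlinarith [Real.pi_gt_three]
    have hcinv : c = (Real.sqrt (2 * Real.pi))⁻¹ := by
      rw [hcdef, hsq, ← Real.rpow_neg (by positivity)]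
    rw [hcinv]
    rw [inv_le_comm₀ (by positivity) (by norm_num)]
    linarith
  have hs32 : s ^ (-(3/2) : ℝ) = a * s⁻¹ := by
    rw [hadef, ← Real.rpow_neg_one s, ← Real.rpow_add hs]
    norm_num
  have hψ : psi s x y = c * a * E := by
    rw [psi, hmul, hEdef, hzdef, neg_div]
  have hψ0 : 0 < psi s x y := by rw [hψ]; positivity
  have habs : |z / (2 * s ^ 2) - 1 / (2 * s)| ≤ z / (2 * s ^ 2) + 1 / (2 * s) := by
    have h1 : (0:ℝ) ≤ z / (2 * s ^ 2) := by positivity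
    have h2 : (0:ℝ) ≤ 1 / (2 * s) := by positivity
    rw [abs_le]
    constructor <;> linarith
  have hEz : E * z ≤ 2 * s := by linarith [mul_comm z E, hzE]
  have step1 : E * (z / (2 * s ^ 2)) ≤ s⁻¹ := by
    calc E * (z / (2 * s ^ 2)) = (E * z) / (2 * s ^ 2) := by ring
      _ ≤ (2 * s) / (2 * s ^ 2) := by gcongr
      _ = s⁻¹ := by field_simp
  have step2 : E * (1 / (2 * s)) ≤ 1 / (2 * s) := by
    calc E * (1 / (2 * s)) ≤ 1 * (1 / (2 * s)) := by gcongr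
      _ = 1 / (2 * s) := by ring
  calc |psi s x y * (z / (2 * s ^ 2) - 1 / (2 * s))|
      = psi s x y * |z / (2 * s ^ 2) - 1 / (2 * s)| := by
        rw [abs_mul, abs_of_pos hψ0]
    _ ≤ psi s x y * (z / (2 * s ^ 2) + 1 / (2 * s)) := mul_le_mul_of_nonneg_left habs hψ0.le
    _ = c * a * (E * (z / (2 * s ^ 2)) + E * (1 / (2 * s))) := by rw [hψ]; ring
    _ ≤ c * a * (s⁻¹ + 1 / (2 * s)) := by gcongr
    _ = c * (a * (3/2) * s⁻¹) := by field_simp; ring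
    _ ≤ (2/3) * (a * (3/2) * s⁻¹) := by gcongr
    _ = a * s⁻¹ := by ring
    _ = s ^ (-(3/2) : ℝ) := hs32.symm

lemma psi_diff_le (x y : ℝ) {t ε : ℝ} (ht : 0 < t) (hε : 0 < ε) :
    |psi (t + ε) x y - psi t x y| ≤ ε * t ^ (-(3/2) : ℝ) := by
  have key := (convex_Icc t (t + ε)).norm_image_sub_le_of_norm_hasDerivWithin_le
    (f := fun u => psi u x y)
    (f' := fun u => psi u x y * ((y - x) ^ 2 / (2 * u ^ 2) - 1 / (2 * u)))
    (C := t ^ (-(3/2) : ℝ))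
    (fun u hu => (psi_hasDerivAt x y (lt_of_lt_of_le ht hu.1)).hasDerivWithinAt)
    (fun u hu => by
      have hu0 : 0 < u := lt_of_lt_of_le ht hu.1
      refine le_trans ?_ (Real.rpow_le_rpow_of_nonpos ht hu.1 (by norm_num))
      exact deriv_bound x y hu0)
    (Set.left_mem_Icc.mpr (by linarith)) (Set.right_mem_Icc.mpr (by linarith))
  have : ‖(t + ε) - t‖ = ε := by
    simp [abs_of_pos hε]
  rw [Real.norm_eq_abs] at key
  rw [this] at key
  linarith [mul_comm (t ^ (-(3/2) : ℝ)) ε, key]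

/-- Time-increment bound for the heat kernel:
|ψ_{t+ε}^x(y) − ψ_t^x(y)|^p ≤ (ε t^{-3/2})^δ ((ψ_{t+ε}^x(y))^{p−δ} + (ψ_t^x(y))^{p−δ}). -/
theorem heat_kernel_time_increment (x y t ε δ p : ℝ) (ht : 0 < t) (hε : 0 < ε)
    (hδ0 : 0 ≤ δ) (hδp : δ ≤ p) :
    |psi (t + ε) x y - psi t x y| ^ p ≤
      (ε * t ^ (-(3/2) : ℝ)) ^ δ *
        ((psi (t + ε) x y) ^ (p - δ) + (psi t x y) ^ (p - δ)) := by
  set a : ℝ := psi (t + ε) x y with hadef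
  set b : ℝ := psi t x y with hbdef
  have ha0 : 0 < a := psi_pos x y (by linarith)
  have hb0 : 0 < b := psi_pos x y ht
  set d : ℝ := |a - b| with hddef
  have hd0 : 0 ≤ d := abs_nonneg _
  set K : ℝ := ε * t ^ (-(3/2) : ℝ) with hKdef
  have hK0 : 0 < K := by rw [hKdef]; positivity
  have hdK : d ≤ K := psi_diff_le x y ht hε
  have hdmax : d ≤ max a b := by
    rw [hddef, abs_sub_le_iff]
    constructor
    · have := le_max_left a b; linarith
    · have := le_max_right a b; linarith
  have hmaxsum : (max a b) ^ (p - δ) ≤ a ^ (p - δ) + b ^ (p - δ) := by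
    rcases max_cases a b with ⟨h1, _⟩ | ⟨h1, _⟩ <;> rw [h1]
    · nlinarith [Real.rpow_nonneg hb0.le (p - δ)]
    · nlinarith [Real.rpow_nonneg ha0.le (p - δ)]
  have hdsum : d ^ (p - δ) ≤ a ^ (p - δ) + b ^ (p - δ) :=
    le_trans (Real.rpow_le_rpow hd0 hdmax (by linarith)) hmaxsum
  rcases eq_or_lt_of_le hd0 with hdz | hdpos
  · -- d = 0
    rcases eq_or_lt_of_le (le_trans hδ0 hδp) with hpz | hppos
    · -- p = 0
      have hδz : δ = 0 := le_antisymm (hpz ▸ hδp) hδ0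
      rw [← hdz, ← hpz, hδz]
      norm_num [Real.rpow_zero]
    · rw [← hdz, Real.zero_rpow hppos.ne']
      positivity
  · calc d ^ p = d ^ δ * d ^ (p - δ) := by
          rw [← Real.rpow_add hdpos]; ring_nf
      _ ≤ K ^ δ * (a ^ (p - δ) + b ^ (p - δ)) := by
          apply mul_le_mul (Real.rpow_le_rpow hd0 hdK hδ0) hdsum
            (Real.rpow_nonneg hd0 _) (Real.rpow_nonneg hK0.le _)
end

section
/- Let Y^1, Y^2 be two independent simple random walks on ℤ started at 0. For every β > 0 and K > 0, sup_N E[(1 + β^2 N^{-1/2})^{#{1 ≤ i ≤ ⌊KN⌋ : Y^1_i = Y^2_i}}] < ∞, i.e., the exponential collision moments are bounded uniformly in N. -/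
/-- Position after `i` steps of the walk whose step signs are given by `ε`
(each `Bool` encodes a ±1 step); this realizes a simple random walk on ℤ started at 0
when `ε` is uniform. -/
def walkOf {m : ℕ} (ε : Fin m → Bool) (i : ℕ) : ℤ :=
  ∑ j ∈ Finset.univ.filter (fun j : Fin m => (j : ℕ) < i), (if ε j then 1 else -1)

/-- Number of collisions of two walks in time window {1, …, m}. -/
def collisions (m : ℕ) (ε η : Fin m → Bool) : ℕ :=
  ((Finset.Icc 1 m).filter (fun i => walkOf ε i = walkOf η i)).card

open Finset

namespace Coll

lemma walkOf_eq {m : ℕ} (ε : Fin m → Bool) (i : ℕ) :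
    walkOf ε i = ∑ j : Fin m, if (j : ℕ) < i then (if ε j then (1:ℤ) else -1) else 0 := by
  rw [walkOf, Finset.sum_filter]

lemma walkOf_zero {m : ℕ} (ε : Fin m → Bool) : walkOf ε 0 = 0 := by
  simp [walkOf_eq]

def join {t s : ℕ} (a : Fin t → Bool) (b : Fin s → Bool) : Fin (t + s) → Bool :=
  fun j => if h : (j : ℕ) < t then a ⟨j, h⟩ else b ⟨(j : ℕ) - t, by have := j.2; omega⟩

lemma join_castAdd {t s : ℕ} (a : Fin t → Bool) (b : Fin s → Bool) (j : Fin t) :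
    join a b (Fin.castAdd s j) = a j := by
  simp only [join, Fin.coe_castAdd]
  rw [dif_pos j.2]

lemma join_natAdd {t s : ℕ} (a : Fin t → Bool) (b : Fin s → Bool) (j : Fin s) :
    join a b (Fin.natAdd t j) = b j := by
  simp only [join, Fin.coe_natAdd]
  rw [dif_neg (by omega)]
  congr 1
  exact Fin.ext (by simp)

lemma walkOf_join {t s : ℕ} (a : Fin t → Bool) (b : Fin s → Bool) (i : ℕ) :
    walkOf (join a b) i = walkOf a (min i t) + walkOf b (i - t) := by
  rw [walkOf_eq, walkOf_eq, walkOf_eq, Fin.sum_univ_add]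
  congr 1
  · refine Finset.sum_congr rfl fun j _ => ?_
    rw [join_castAdd]
    have hj : ((Fin.castAdd s j : Fin (t + s)) : ℕ) = (j : ℕ) := rfl
    rw [hj]
    have hlt := j.2
    congr 1
    exact propext (by omega)
  · refine Finset.sum_congr rfl fun j _ => ?_
    rw [join_natAdd]
    have hj : ((Fin.natAdd t j : Fin (t + s)) : ℕ) = t + (j : ℕ) := rfl
    rw [hj]
    congr 1
    exact propext (by omega)

lemma join_bijective (t s : ℕ) :
    Function.Bijective (fun p : (Fin t → Bool) × (Fin s → Bool) => join p.1 p.2) := by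
  rw [Fintype.bijective_iff_injective_and_card]
  constructor
  · intro p q h
    have h' : join p.1 p.2 = join q.1 q.2 := h
    ext j
    · have := congrFun h' (Fin.castAdd s j)
      rwa [join_castAdd, join_castAdd] at this
    · have := congrFun h' (Fin.natAdd t j)
      rwa [join_natAdd, join_natAdd] at this
  · simp [pow_add]

lemma sum_join {t s : ℕ} (f : (Fin (t + s) → Bool) → ℝ) :
    ∑ ε : Fin (t + s) → Bool, f ε
      = ∑ a : Fin t → Bool, ∑ b : Fin s → Bool, f (join a b) := by
  calc ∑ ε : Fin (t + s) → Bool, f ε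
      = ∑ p : (Fin t → Bool) × (Fin s → Bool), f (join p.1 p.2) :=
        (Fintype.sum_bijective _ (join_bijective t s) _ _ (fun p => rfl)).symm
    _ = ∑ a : Fin t → Bool, ∑ b : Fin s → Bool, f (join a b) := Fintype.sum_prod_type _



def cnt {t : ℕ} (a : Fin t → Bool) : ℕ := (univ.filter fun j => a j = true).card

lemma cnt_le {t : ℕ} (a : Fin t → Bool) : cnt a ≤ t := by
  have := Finset.card_filter_le (univ : Finset (Fin t)) (fun j => a j = true)
  simpa [cnt] using this

lemma walkOf_top {t : ℕ} (a : Fin t → Bool) : walkOf a t = 2 * (cnt a : ℤ) - t := by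
  rw [walkOf, Finset.filter_true_of_mem (fun j _ => j.2)]
  have h : ∀ j : Fin t, (if a j then (1:ℤ) else -1) = 2 * (if a j = true then 1 else 0) - 1 := by
    intro j; by_cases h : a j <;> simp [h]
  rw [Finset.sum_congr rfl fun j _ => h j, Finset.sum_sub_distrib, ← Finset.mul_sum,
    Finset.sum_boole, Finset.sum_const, card_univ, Fintype.card_fin]
  simp [cnt]

lemma walkOf_top_iff {t : ℕ} (a a' : Fin t → Bool) :
    walkOf a t = walkOf a' t ↔ cnt a = cnt a' := by
  rw [walkOf_top, walkOf_top]; omega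

lemma card_cnt (t k : ℕ) :
    (univ.filter fun a : Fin t → Bool => cnt a = k).card = t.choose k := by
  have hpc : (Finset.powersetCard k (univ : Finset (Fin t))).card = t.choose k := by
    simp [Finset.card_powersetCard]
  rw [← hpc]
  · apply Finset.card_bij' (fun a _ => univ.filter fun j => a j = true)
      (fun S _ => fun x => decide (x ∈ S))
    · intro a ha
      funext x
      simp
    · intro S hS
      ext x
      simp
    · intro a ha
      rw [Finset.mem_powersetCard]
      refine ⟨Finset.filter_subset _ _, ?_⟩
      simpa [cnt] using (Finset.mem_filter.mp ha).2
    · intro S hS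
      rw [Finset.mem_filter]
      refine ⟨Finset.mem_univ _, ?_⟩
      rw [Finset.mem_powersetCard] at hS
      rw [cnt, ← hS.2]
      congr 1
      ext x
      simp

lemma count_pairs (t : ℕ) :
    ∑ a : Fin t → Bool, ∑ a' : Fin t → Bool,
      (if walkOf a t = walkOf a' t then (1:ℝ) else 0) = ((t + t).choose t : ℝ) := by
  have h1 : ∀ a a' : Fin t → Bool,
      (if walkOf a t = walkOf a' t then (1:ℝ) else 0)
        = ∑ k ∈ range (t+1), (if cnt a = k then (1:ℝ) else 0) * (if cnt a' = k then 1 else 0) := by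
    intro a a'
    rw [Finset.sum_eq_single (cnt a')]
    · by_cases h : cnt a = cnt a'
      · simp [h, (walkOf_top_iff a a').mpr h]
      · have hw : ¬ walkOf a t = walkOf a' t := fun hw => h ((walkOf_top_iff a a').mp hw)
        simp [h, hw]
    · intro k _ hk
      rw [if_neg (fun h : cnt a' = k => hk h.symm), mul_zero]
    · intro hmem
      exact absurd (Finset.mem_range.mpr (Nat.lt_succ_of_le (cnt_le a'))) hmem
  have hv : ∑ k ∈ range (t+1), t.choose k * t.choose k = (t+t).choose t := by
    rw [Nat.add_choose_eq, Finset.Nat.sum_antidiagonal_eq_sum_range_succ_mk]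
    refine Finset.sum_congr rfl fun k hk => ?_
    rw [Nat.choose_symm (Nat.lt_succ_iff.mp (Finset.mem_range.mp hk))]
  calc ∑ a : Fin t → Bool, ∑ a' : Fin t → Bool,
      (if walkOf a t = walkOf a' t then (1:ℝ) else 0)
      = ∑ a : Fin t → Bool, ∑ a' : Fin t → Bool, ∑ k ∈ range (t+1),
          (if cnt a = k then (1:ℝ) else 0) * (if cnt a' = k then 1 else 0) :=
        Finset.sum_congr rfl fun a _ => Finset.sum_congr rfl fun a' _ => h1 a a'
    _ = ∑ k ∈ range (t+1), (∑ a : Fin t → Bool, if cnt a = k then (1:ℝ) else 0) *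
          (∑ a' : Fin t → Bool, if cnt a' = k then (1:ℝ) else 0) := by
        have hsw : ∀ a : Fin t → Bool,
            (∑ a' : Fin t → Bool, ∑ k ∈ range (t+1),
              (if cnt a = k then (1:ℝ) else 0) * (if cnt a' = k then 1 else 0))
            = ∑ k ∈ range (t+1), ∑ a' : Fin t → Bool,
              (if cnt a = k then (1:ℝ) else 0) * (if cnt a' = k then 1 else 0) :=
          fun a => Finset.sum_comm
        rw [Finset.sum_congr rfl fun a _ => hsw a, Finset.sum_comm]
        refine Finset.sum_congr rfl fun k _ => ?_
        simp only [← Finset.mul_sum, ← Finset.sum_mul]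
    _ = ∑ k ∈ range (t+1), (t.choose k : ℝ) * (t.choose k : ℝ) := by
        refine Finset.sum_congr rfl fun k _ => ?_
        simp [Finset.sum_boole, card_cnt]
    _ = ((t+t).choose t : ℝ) := by
        rw [← hv]
        push_cast
        rfl

lemma prod_one_add (f : ℕ → ℝ) (s : Finset ℕ) :
    ∏ i ∈ s, (1 + f i) = 1 + ∑ t ∈ s, f t * ∏ i ∈ s.filter (fun i => t < i), (1 + f i) := by
  induction s using Finset.induction_on_min with
  | empty => simp
  | insert a s ha ih =>
    have hna : a ∉ s := fun h => lt_irrefl a (ha a h)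
    have hA : (insert a s).filter (fun i => a < i) = s := by
      rw [Finset.filter_insert, if_neg (lt_irrefl a), Finset.filter_true_of_mem ha]
    have hB : ∀ t ∈ s, (insert a s).filter (fun i => t < i) = s.filter (fun i => t < i) := by
      intro t ht
      rw [Finset.filter_insert, if_neg (asymm (ha t ht))]
    rw [Finset.prod_insert hna, Finset.sum_insert hna, hA,
      Finset.sum_congr rfl (fun t ht => by rw [hB t ht]), ih]
    ring

noncomputable def S (lam : ℝ) (m : ℕ) : ℝ :=
  ∑ ε : Fin m → Bool, ∑ η : Fin m → Bool,
    ∏ i ∈ Icc 1 m, (1 + if walkOf ε i = walkOf η i then lam else 0)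

lemma split_sum (lam : ℝ) (t s : ℕ) :
    ∑ ε : Fin (t+s) → Bool, ∑ η : Fin (t+s) → Bool,
      ((if walkOf ε t = walkOf η t then (1:ℝ) else 0) *
        ∏ i ∈ Icc (t+1) (t+s), (1 + if walkOf ε i = walkOf η i then lam else 0))
    = ((t+t).choose t : ℝ) * S lam s := by
  rw [sum_join]
  rw [Finset.sum_congr rfl fun a (_ : a ∈ univ) => Finset.sum_congr rfl fun b (_ : b ∈ univ) =>
    sum_join (fun η => (if walkOf (join a b) t = walkOf η t then (1:ℝ) else 0) *
        ∏ i ∈ Icc (t+1) (t+s), (1 + if walkOf (join a b) i = walkOf η i then lam else 0))]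
  have hw : ∀ (x : Fin t → Bool) (y : Fin s → Bool), walkOf (join x y) t = walkOf x t := by
    intro x y; rw [walkOf_join, min_self, Nat.sub_self, walkOf_zero, add_zero]
  have hpt : ∀ (a : Fin t → Bool) (b : Fin s → Bool) (a' : Fin t → Bool) (b' : Fin s → Bool),
      ((if walkOf (join a b) t = walkOf (join a' b') t then (1:ℝ) else 0) *
        ∏ i ∈ Icc (t+1) (t+s), (1 + if walkOf (join a b) i = walkOf (join a' b') i then lam else 0))
      = (if walkOf a t = walkOf a' t then (1:ℝ) else 0) *
        ∏ i ∈ Icc 1 s, (1 + if walkOf b i = walkOf b' i then lam else 0) := by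
    intro a b a' b'
    rw [hw, hw]
    by_cases h : walkOf a t = walkOf a' t
    · rw [if_pos h, one_mul, one_mul]
      rw [← Finset.map_add_left_Icc 1 s t, Finset.prod_map]
      refine Finset.prod_congr rfl fun i hi => ?_
      have e1 : ((addLeftEmbedding t) i : ℕ) = t + i := rfl
      rw [e1, walkOf_join, walkOf_join,
        min_eq_right (Nat.le_add_right t i), add_tsub_cancel_left]
      congr 2
      rw [h]
      exact propext (add_right_inj _)
    · rw [if_neg h, zero_mul, zero_mul]
  rw [Finset.sum_congr rfl fun a (_ : a ∈ univ) => Finset.sum_congr rfl fun b (_ : b ∈ univ) =>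
    Finset.sum_congr rfl fun a' (_ : a' ∈ univ) => Finset.sum_congr rfl fun b' (_ : b' ∈ univ) =>
      hpt a b a' b']
  rw [Finset.sum_congr rfl fun a (_ : a ∈ (univ : Finset (Fin t → Bool))) =>
    (Finset.sum_comm (s := (univ : Finset (Fin s → Bool)))
      (t := (univ : Finset (Fin t → Bool))))]
  simp only [← Finset.mul_sum]
  simp only [← Finset.sum_mul]
  rw [count_pairs]
  rfl

lemma S_rec (lam : ℝ) (m : ℕ) :
    S lam m = 4^m + lam * ∑ t ∈ Icc 1 m, ((t+t).choose t : ℝ) * S lam (m - t) := by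
  have hexp : ∀ (ε η : Fin m → Bool),
      (∏ i ∈ Icc 1 m, (1 + if walkOf ε i = walkOf η i then lam else 0))
      = 1 + ∑ t ∈ Icc 1 m, lam * ((if walkOf ε t = walkOf η t then (1:ℝ) else 0) *
          ∏ i ∈ Icc (t+1) m, (1 + if walkOf ε i = walkOf η i then lam else 0)) := by
    intro ε η
    rw [prod_one_add]
    congr 1
    refine Finset.sum_congr rfl fun t ht => ?_
    have hfil : (Icc 1 m).filter (fun i => t < i) = Icc (t+1) m := by
      ext x
      simp only [Finset.mem_filter, Finset.mem_Icc]
      have := Finset.mem_Icc.mp ht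
      omega
    rw [hfil]
    by_cases h : walkOf ε t = walkOf η t
    · rw [if_pos h, if_pos h]; ring
    · rw [if_neg h, if_neg h]; ring
  unfold S
  rw [Finset.sum_congr rfl fun ε (_ : ε ∈ univ) => Finset.sum_congr rfl fun η (_ : η ∈ univ) =>
    hexp ε η]
  rw [Finset.sum_congr rfl fun ε (_ : ε ∈ univ) =>
    (Finset.sum_add_distrib (s := (univ : Finset (Fin m → Bool)))), Finset.sum_add_distrib]
  congr 1
  · rw [Finset.sum_const, Finset.sum_const, Finset.card_univ]
    simp only [nsmul_eq_mul, mul_one]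
    rw [show (Fintype.card (Fin m → Bool) : ℝ) = 2^m by simp [Fintype.card_fun]]
    rw [← mul_pow]
    norm_num
  · rw [Finset.sum_congr rfl fun ε (_ : ε ∈ univ) =>
      (Finset.sum_comm (s := (univ : Finset (Fin m → Bool))) (t := Icc 1 m)), Finset.sum_comm,
      Finset.mul_sum]
    refine Finset.sum_congr rfl fun t ht => ?_
    simp only [← Finset.mul_sum]
    congr 1
    have ht' := Finset.mem_Icc.mp ht
    obtain ⟨s, rfl⟩ : ∃ s, m = t + s := ⟨m - t, by omega⟩
    rw [add_tsub_cancel_left]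
    exact split_sum lam t s

lemma S_nonneg (lam : ℝ) (hlam : 0 ≤ lam) (m : ℕ) : 0 ≤ S lam m := by
  apply Finset.sum_nonneg; intro ε _
  apply Finset.sum_nonneg; intro η _
  apply Finset.prod_nonneg; intro i _
  split_ifs <;> linarith

lemma cb_sq (t : ℕ) : (Nat.centralBinom t)^2 * (2*t+1) ≤ 16^t := by
  induction t with
  | zero => simp [Nat.centralBinom]
  | succ t ih =>
    have key := Nat.succ_mul_centralBinom_succ t
    have hpos : 0 < (t+1)^2 := by positivity
    apply Nat.le_of_mul_le_mul_right _ hpos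
    have e1 : Nat.centralBinom (t+1) ^ 2 * (2*(t+1)+1) * (t+1)^2
        = ((t+1) * Nat.centralBinom (t+1))^2 * (2*t+3) := by ring
    rw [e1, key]
    have e2 : (2 * (2*t+1) * Nat.centralBinom t)^2 * (2*t+3)
        = (4*(2*t+1)*(2*t+3)) * (Nat.centralBinom t ^2 * (2*t+1)) := by ring
    rw [e2]
    calc (4*(2*t+1)*(2*t+3)) * (Nat.centralBinom t ^2 * (2*t+1))
        ≤ (16*(t+1)^2) * 16^t := Nat.mul_le_mul (by nlinarith) ih
      _ = 16^(t+1) * (t+1)^2 := by ring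

lemma central_bound (t : ℕ) (ht : 1 ≤ t) :
    (((t+t).choose t : ℕ) : ℝ) ≤ 4^t * (Real.sqrt t)⁻¹ := by
  have hcb : (t+t).choose t = Nat.centralBinom t := by
    rw [Nat.centralBinom_eq_two_mul_choose, two_mul]
  have hsq : ((Nat.centralBinom t : ℝ))^2 * (2*(t:ℝ)+1) ≤ 16^t := by
    have h2 := Nat.cast_le (α := ℝ) |>.mpr (cb_sq t)
    push_cast at h2
    convert h2 using 2 <;> push_cast <;> ring
  have hspos : 0 < Real.sqrt t := Real.sqrt_pos.mpr (by exact_mod_cast ht)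
  rw [← div_eq_mul_inv, le_div_iff₀ hspos]
  have hsq2 : ((Nat.centralBinom t : ℝ) * Real.sqrt t)^2 ≤ ((4:ℝ)^t)^2 := by
    rw [mul_pow, Real.sq_sqrt (by positivity : (0:ℝ) ≤ (t:ℝ))]
    calc (Nat.centralBinom t : ℝ)^2 * t
        ≤ (Nat.centralBinom t : ℝ)^2 * (2*(t:ℝ)+1) := by
          nlinarith [sq_nonneg ((Nat.centralBinom t : ℝ)), Nat.cast_nonneg (α := ℝ) t]
      _ ≤ 16^t := hsq
      _ = ((4:ℝ)^t)^2 := by rw [← pow_mul, mul_comm t 2, pow_mul]; norm_num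
  rw [hcb]
  exact (pow_le_pow_iff_left₀ (by positivity) (by positivity) two_ne_zero).mp hsq2

noncomputable def A : ℕ → ℕ → ℝ
  | 0, _ => 1
  | k+1, m => ∑ t ∈ Icc 1 m, (Real.sqrt t)⁻¹ * A k (m - t)

lemma A_zero (m : ℕ) : A 0 m = 1 := rfl
lemma A_succ (k m : ℕ) : A (k+1) m = ∑ t ∈ Icc 1 m, (Real.sqrt t)⁻¹ * A k (m - t) := rfl

lemma A_nonneg (k : ℕ) : ∀ m, 0 ≤ A k m := by
  induction k with
  | zero => intro m; rw [A_zero]; norm_num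
  | succ k ih =>
    intro m
    rw [A_succ]
    exact Finset.sum_nonneg fun t _ => mul_nonneg (inv_nonneg.mpr (Real.sqrt_nonneg _)) (ih _)

lemma A_eq_zero (k : ℕ) : ∀ m, m < k → A k m = 0 := by
  induction k with
  | zero => intro m h; omega
  | succ k ih =>
    intro m h
    rw [A_succ]
    apply Finset.sum_eq_zero
    intro t ht
    have := Finset.mem_Icc.mp ht
    rw [ih _ (by omega), mul_zero]

lemma inv_le_of_le_mul {a b y : ℝ} (ha : 0 < a) (hy : 0 < y) (h : a ≤ b * y) :
    y⁻¹ ≤ b * a⁻¹ := by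
  rw [inv_eq_one_div, show b * a⁻¹ = b / a from (div_eq_mul_inv b a).symm,
    div_le_div_iff₀ hy ha]
  linarith

lemma sqrt_inv_le (t : ℕ) (ht : 1 ≤ t) :
    (Real.sqrt t)⁻¹ ≤ 2 * (Real.sqrt t - Real.sqrt (t-1 : ℕ)) := by
  have hpos : 0 < Real.sqrt t := Real.sqrt_pos.mpr (by exact_mod_cast ht)
  have hx2 : Real.sqrt t ^ 2 = t := Real.sq_sqrt (by positivity)
  have hy2 : Real.sqrt (t-1:ℕ) ^ 2 = ((t-1:ℕ):ℝ) := Real.sq_sqrt (by positivity)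
  have hy0 : 0 ≤ Real.sqrt (t-1:ℕ) := Real.sqrt_nonneg _
  have hcast : ((t-1:ℕ):ℝ) = (t:ℝ) - 1 := by
    push_cast [Nat.cast_sub ht]; ring
  rw [inv_eq_one_div, div_le_iff₀ hpos]
  nlinarith [sq_nonneg (Real.sqrt t - Real.sqrt (t-1:ℕ))]

lemma sum_inv_sqrt (m : ℕ) : ∑ t ∈ Icc 1 m, (Real.sqrt t)⁻¹ ≤ 2 * Real.sqrt m := by
  have tel : ∑ t ∈ Icc 1 m, (Real.sqrt t - Real.sqrt (t-1:ℕ)) = Real.sqrt m := by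
    rw [← Finset.Ico_add_one_right_eq_Icc, Finset.sum_Ico_eq_sum_range]
    have hcg : ∀ i ∈ Finset.range (m + 1 - 1), (Real.sqrt ((1+i:ℕ)) - Real.sqrt ((1+i-1:ℕ)))
        = Real.sqrt ((i+1:ℕ)) - Real.sqrt (i:ℕ) := by
      intro i _
      congr 3
      · omega
      · omega
    rw [Finset.sum_congr rfl hcg, Finset.sum_range_sub (fun i => Real.sqrt (i:ℕ))]
    simp
  calc ∑ t ∈ Icc 1 m, (Real.sqrt t)⁻¹
      ≤ ∑ t ∈ Icc 1 m, 2 * (Real.sqrt t - Real.sqrt (t-1:ℕ)) :=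
        Finset.sum_le_sum fun t ht => sqrt_inv_le t (Finset.mem_Icc.mp ht).1
    _ = 2 * Real.sqrt m := by rw [← Finset.mul_sum, tel]

lemma conv_bound (s : ℕ) (hs : 1 ≤ s) :
    ∑ t ∈ Icc 1 (s-1), (Real.sqrt t)⁻¹ * (Real.sqrt (s-t:ℕ))⁻¹ ≤ 6 := by
  have hspos : 0 < Real.sqrt s := Real.sqrt_pos.mpr (by exact_mod_cast hs)
  set c : ℝ := Real.sqrt 2 * (Real.sqrt s)⁻¹ with hc
  have hc0 : 0 ≤ c := by positivity
  have hpt : ∀ t ∈ Icc 1 (s-1), (Real.sqrt t)⁻¹ * (Real.sqrt (s-t:ℕ))⁻¹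
      ≤ c * ((Real.sqrt t)⁻¹ + (Real.sqrt (s-t:ℕ))⁻¹) := by
    intro t ht
    have htb := Finset.mem_Icc.mp ht
    have ht1 : 1 ≤ t := htb.1
    have hts : t ≤ s - 1 := htb.2
    have hst1 : 1 ≤ s - t := by omega
    have hgt0 : 0 ≤ (Real.sqrt t)⁻¹ := by positivity
    have hgst0 : 0 ≤ (Real.sqrt (s-t:ℕ))⁻¹ := by positivity
    rcases le_or_gt (2*t) s with hcase | hcase
    · have hss : Real.sqrt s ≤ Real.sqrt 2 * Real.sqrt (s-t:ℕ) := by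
        rw [← Real.sqrt_mul (by norm_num)]
        apply Real.sqrt_le_sqrt
        have hc1 : ((s-t:ℕ):ℝ) = (s:ℝ) - t := by push_cast [Nat.cast_sub (by omega : t ≤ s)]; ring
        have h2 : (2*(t:ℝ)) ≤ s := by exact_mod_cast hcase
        rw [hc1]; linarith
      have hb : (Real.sqrt (s-t:ℕ))⁻¹ ≤ c :=
        inv_le_of_le_mul hspos (Real.sqrt_pos.mpr (by exact_mod_cast hst1)) hss
      nlinarith [mul_nonneg hgt0 (sub_nonneg.mpr hb)]
    · have hss : Real.sqrt s ≤ Real.sqrt 2 * Real.sqrt t := by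
        rw [← Real.sqrt_mul (by norm_num)]
        apply Real.sqrt_le_sqrt
        have h2 : (s:ℝ) < 2*(t:ℝ) := by exact_mod_cast hcase
        linarith
      have hb : (Real.sqrt t)⁻¹ ≤ c :=
        inv_le_of_le_mul hspos (Real.sqrt_pos.mpr (by exact_mod_cast ht1)) hss
      nlinarith [mul_nonneg hgst0 (sub_nonneg.mpr hb)]
  have hre : ∑ t ∈ Icc 1 (s-1), (Real.sqrt ((s-t:ℕ)))⁻¹ = ∑ t ∈ Icc 1 (s-1), (Real.sqrt t)⁻¹ := by
    apply Finset.sum_nbij' (fun t => s - t) (fun t => s - t)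
    · intro a ha; have := Finset.mem_Icc.mp ha; rw [Finset.mem_Icc]; omega
    · intro a ha; have := Finset.mem_Icc.mp ha; rw [Finset.mem_Icc]; omega
    · intro a ha; have := Finset.mem_Icc.mp ha; omega
    · intro a ha; have := Finset.mem_Icc.mp ha; omega
    · intro a ha; rfl
  have hsum2 : ∑ t ∈ Icc 1 (s-1), (Real.sqrt t)⁻¹ ≤ 2 * Real.sqrt s := by
    calc ∑ t ∈ Icc 1 (s-1), (Real.sqrt t)⁻¹ ≤ 2 * Real.sqrt (s-1:ℕ) := sum_inv_sqrt (s-1)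
      _ ≤ 2 * Real.sqrt s := by
          apply mul_le_mul_of_nonneg_left _ (by norm_num)
          exact Real.sqrt_le_sqrt (Nat.cast_le.mpr (by omega))
  have hs2 : Real.sqrt 2 ≤ 1.5 := by
    nlinarith [Real.sq_sqrt (by norm_num : (0:ℝ) ≤ 2), Real.sqrt_nonneg 2]
  calc ∑ t ∈ Icc 1 (s-1), (Real.sqrt t)⁻¹ * (Real.sqrt (s-t:ℕ))⁻¹
      ≤ ∑ t ∈ Icc 1 (s-1), c * ((Real.sqrt t)⁻¹ + (Real.sqrt (s-t:ℕ))⁻¹) :=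
        Finset.sum_le_sum hpt
    _ = c * (∑ t ∈ Icc 1 (s-1), (Real.sqrt t)⁻¹ + ∑ t ∈ Icc 1 (s-1), (Real.sqrt (s-t:ℕ))⁻¹) := by
        rw [← Finset.mul_sum, Finset.sum_add_distrib]
    _ ≤ c * (2 * Real.sqrt s + 2 * Real.sqrt s) := by
        apply mul_le_mul_of_nonneg_left _ hc0
        rw [hre]
        linarith
    _ = 4 * Real.sqrt 2 * ((Real.sqrt s)⁻¹ * Real.sqrt s) := by rw [hc]; ring
    _ ≤ 6 := by rw [inv_mul_cancel₀ hspos.ne']; linarith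

lemma A_two_step (k m : ℕ) : A (k+2) m ≤ 6 * ∑ n ∈ range m, A k n := by
  have e1 : A (k+2) m = ∑ t ∈ Icc 1 m, ∑ r ∈ Icc 1 (m-t),
      (Real.sqrt t)⁻¹ * ((Real.sqrt r)⁻¹ * A k (m-t-r)) := by
    rw [A_succ]
    refine Finset.sum_congr rfl fun t _ => ?_
    rw [A_succ, Finset.mul_sum]
  have e2 : ∀ t ∈ Icc 1 m, (∑ r ∈ Icc 1 (m-t), (Real.sqrt t)⁻¹ * ((Real.sqrt r)⁻¹ * A k (m-t-r)))
      = ∑ n ∈ range m, (if n < m - t then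
          (Real.sqrt t)⁻¹ * ((Real.sqrt ((m-t-n:ℕ)))⁻¹ * A k n) else 0) := by
    intro t ht
    have htb := Finset.mem_Icc.mp ht
    rw [← Finset.sum_filter]
    apply Finset.sum_nbij' (fun r => m - t - r) (fun n => m - t - n)
    · intro a ha; have := Finset.mem_Icc.mp ha
      simp only [Finset.mem_filter, Finset.mem_range]; omega
    · intro a ha
      have h2 := Finset.mem_filter.mp ha
      have h3 := Finset.mem_range.mp h2.1
      rw [Finset.mem_Icc]; omega
    · intro a ha; have := Finset.mem_Icc.mp ha; omega
    · intro a ha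
      have h2 := Finset.mem_filter.mp ha
      have h3 := Finset.mem_range.mp h2.1
      omega
    · intro a ha; have := Finset.mem_Icc.mp ha
      have e : m - t - (m - t - a) = a := by omega
      rw [e]
  have e3 : ∀ n ∈ range m, (∑ t ∈ Icc 1 m, if n < m - t then
      (Real.sqrt t)⁻¹ * ((Real.sqrt ((m-t-n:ℕ)))⁻¹ * A k n) else 0) ≤ 6 * A k n := by
    intro n hn
    have hn' := Finset.mem_range.mp hn
    have hfil : (Icc 1 m).filter (fun t => n < m - t) = Icc 1 (m-n-1) := by
      ext x; simp only [Finset.mem_filter, Finset.mem_Icc]; omega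
    rw [← Finset.sum_filter, hfil]
    have hc : ∀ t ∈ Icc 1 (m-n-1), (Real.sqrt t)⁻¹ * ((Real.sqrt ((m-t-n:ℕ)))⁻¹ * A k n)
        = ((Real.sqrt t)⁻¹ * (Real.sqrt ((m-n-t:ℕ)))⁻¹) * A k n := by
      intro t _
      rw [show m-t-n = m-n-t from by omega]; ring
    rw [Finset.sum_congr rfl hc, ← Finset.sum_mul]
    exact mul_le_mul_of_nonneg_right (conv_bound (m-n) (by omega)) (A_nonneg k n)
  calc A (k+2) m = ∑ t ∈ Icc 1 m, ∑ n ∈ range m, (if n < m - t then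
          (Real.sqrt t)⁻¹ * ((Real.sqrt ((m-t-n:ℕ)))⁻¹ * A k n) else 0) := by
        rw [e1]; exact Finset.sum_congr rfl e2
    _ = ∑ n ∈ range m, ∑ t ∈ Icc 1 m, (if n < m - t then
          (Real.sqrt t)⁻¹ * ((Real.sqrt ((m-t-n:ℕ)))⁻¹ * A k n) else 0) := Finset.sum_comm
    _ ≤ ∑ n ∈ range m, 6 * A k n := Finset.sum_le_sum e3
    _ = 6 * ∑ n ∈ range m, A k n := by rw [Finset.mul_sum]

lemma pow_succ_le (m k : ℕ) : m^(k+1) + (k+1)*m^k ≤ (m+1)^(k+1) := by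
  induction k with
  | zero => norm_num
  | succ k ih =>
    have h1 : (m+1)*(m^(k+1) + (k+1)*m^k) ≤ (m+1)*(m+1)^(k+1) := Nat.mul_le_mul_left _ ih
    have e : (m+1)*(m^(k+1)+(k+1)*m^k) = m^(k+1+1) + (k+1+1)*m^(k+1) + (k+1)*m^k := by ring
    have e2 : (m+1)*(m+1)^(k+1) = (m+1)^(k+1+1) := by ring
    rw [e, e2] at h1
    exact le_trans (Nat.le_add_right _ _) h1

lemma sum_pow_le (m k : ℕ) : ((k:ℝ)+1) * ∑ n ∈ range m, (n:ℝ)^k ≤ (m:ℝ)^(k+1) := by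
  induction m with
  | zero => simp
  | succ m ih =>
    rw [Finset.sum_range_succ, mul_add]
    have hp : ((m:ℝ))^(k+1) + ((k:ℝ)+1)*(m:ℝ)^k ≤ ((m:ℝ)+1)^(k+1) := by
      have h2 := Nat.cast_le (α := ℝ) |>.mpr (pow_succ_le m k)
      push_cast at h2
      linarith
    push_cast
    linarith

lemma A_even (k : ℕ) : ∀ m, A (2*k) m ≤ (6*(m:ℝ))^k / (Nat.factorial k) := by
  induction k with
  | zero => intro m; rw [show 2*0 = 0 from rfl, A_zero]; simp
  | succ k ih =>
    intro m
    have hfac : (0:ℝ) < (Nat.factorial k : ℝ) := by positivity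
    calc A (2*(k+1)) m = A (2*k+2) m := by rw [show 2*(k+1) = 2*k+2 from by ring]
      _ ≤ 6 * ∑ n ∈ range m, A (2*k) n := A_two_step (2*k) m
      _ ≤ 6 * ∑ n ∈ range m, (6*(n:ℝ))^k / k.factorial :=
          mul_le_mul_of_nonneg_left (Finset.sum_le_sum fun n _ => ih n) (by norm_num)
      _ = (6^(k+1) / k.factorial) * ∑ n ∈ range m, (n:ℝ)^k := by
          rw [Finset.mul_sum, Finset.mul_sum]
          refine Finset.sum_congr rfl fun n _ => ?_
          rw [mul_pow]
          ring
      _ ≤ (6^(k+1)/k.factorial) * ((m:ℝ)^(k+1)/((k:ℝ)+1)) := by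
          apply mul_le_mul_of_nonneg_left _ (by positivity)
          rw [le_div_iff₀ (by positivity : (0:ℝ) < (k:ℝ)+1)]
          calc (∑ n ∈ range m, (n:ℝ)^k) * ((k:ℝ)+1)
              = ((k:ℝ)+1) * ∑ n ∈ range m, (n:ℝ)^k := by ring
            _ ≤ (m:ℝ)^(k+1) := sum_pow_le m k
      _ = (6*(m:ℝ))^(k+1) / (Nat.factorial (k+1)) := by
          rw [Nat.factorial_succ, mul_pow, div_mul_div_comm]
          congr 1
          push_cast
          ring

lemma A_odd (k : ℕ) (m : ℕ) :
    A (2*k+1) m ≤ 2*Real.sqrt m * ((6*(m:ℝ))^k / k.factorial) := by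
  rw [A_succ]
  have hterm : ∀ t ∈ Icc 1 m, (Real.sqrt t)⁻¹ * A (2*k) (m-t)
      ≤ (Real.sqrt t)⁻¹ * ((6*(m:ℝ))^k / k.factorial) := by
    intro t _
    apply mul_le_mul_of_nonneg_left _ (by positivity)
    calc A (2*k) (m-t) ≤ (6*((m-t:ℕ):ℝ))^k / k.factorial := A_even k (m-t)
      _ ≤ (6*(m:ℝ))^k / k.factorial := by
          have hle : ((m-t:ℕ):ℝ) ≤ (m:ℝ) := Nat.cast_le.mpr (Nat.sub_le m t)
          gcongr
  calc ∑ t ∈ Icc 1 m, (Real.sqrt t)⁻¹ * A (2*k) (m-t)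
      ≤ ∑ t ∈ Icc 1 m, (Real.sqrt t)⁻¹ * ((6*(m:ℝ))^k / k.factorial) :=
        Finset.sum_le_sum hterm
    _ = (∑ t ∈ Icc 1 m, (Real.sqrt t)⁻¹) * ((6*(m:ℝ))^k / k.factorial) :=
        (Finset.sum_mul _ _ _).symm
    _ ≤ 2*Real.sqrt m * ((6*(m:ℝ))^k / k.factorial) :=
        mul_le_mul_of_nonneg_right (sum_inv_sqrt m) (by positivity)

noncomputable def Bb (lam : ℝ) (m : ℕ) : ℝ := ∑ k ∈ range (m+1), lam^k * A k m

lemma Bb_nonneg (lam : ℝ) (hlam : 0 ≤ lam) (m : ℕ) : 0 ≤ Bb lam m :=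
  Finset.sum_nonneg fun k _ => mul_nonneg (pow_nonneg hlam k) (A_nonneg k m)

lemma Bb_eq (lam : ℝ) (m M : ℕ) (h : m ≤ M) :
    ∑ k ∈ range (M+1), lam^k * A k m = Bb lam m := by
  rw [Bb]
  symm
  apply Finset.sum_subset
  · intro x hx; simp only [Finset.mem_range] at *; omega
  · intro k hk hk2
    simp only [Finset.mem_range] at hk hk2
    rw [A_eq_zero k m (by omega), mul_zero]

lemma S_le (lam : ℝ) (hlam : 0 ≤ lam) : ∀ m, S lam m ≤ 4^m * Bb lam m := by
  intro m
  induction m using Nat.strong_induction_on with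
  | _ m ih =>
  rcases Nat.eq_zero_or_pos m with rfl | hm
  · simp [S, Bb, A_zero]
  · rw [S_rec]
    have hterm : ∀ t ∈ Icc 1 m, ((t+t).choose t : ℝ) * S lam (m - t)
        ≤ (4:ℝ)^m * ((Real.sqrt t)⁻¹ * Bb lam (m-t)) := by
      intro t ht
      have ht' := Finset.mem_Icc.mp ht
      have h1 : S lam (m-t) ≤ 4^(m-t) * Bb lam (m-t) := ih (m-t) (by omega)
      have h2 := central_bound t ht'.1
      have hS0 := S_nonneg lam hlam (m-t)
      calc ((t+t).choose t : ℝ) * S lam (m-t)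
          ≤ (4^t * (Real.sqrt t)⁻¹) * (4^(m-t) * Bb lam (m-t)) :=
            mul_le_mul h2 h1 hS0 (by positivity)
        _ = ((4:ℝ)^t * 4^(m-t)) * ((Real.sqrt t)⁻¹ * Bb lam (m-t)) := by ring
        _ = (4:ℝ)^m * ((Real.sqrt t)⁻¹ * Bb lam (m-t)) := by
            rw [← pow_add]
            congr 2
            omega
    have hB : ∀ t ∈ Icc 1 m, Bb lam (m-t) = ∑ k ∈ range m, lam^k * A k (m-t) := by
      intro t ht
      have ht' := Finset.mem_Icc.mp ht
      rw [← Bb_eq lam (m-t) (m-1) (by omega), show m - 1 + 1 = m from by omega]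
    calc (4:ℝ)^m + lam * ∑ t ∈ Icc 1 m, ((t+t).choose t : ℝ) * S lam (m-t)
        ≤ 4^m + lam * ∑ t ∈ Icc 1 m, (4:ℝ)^m * ((Real.sqrt t)⁻¹ * Bb lam (m-t)) :=
          add_le_add_right (mul_le_mul_of_nonneg_left (Finset.sum_le_sum hterm) hlam) _
      _ = 4^m * (1 + lam * ∑ t ∈ Icc 1 m, (Real.sqrt t)⁻¹ * Bb lam (m-t)) := by
          rw [← Finset.mul_sum]
          ring
      _ = 4^m * Bb lam m := by
          congr 1
          rw [Finset.sum_congr rfl fun t ht => by rw [hB t ht]]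
          have e1 : ∀ t ∈ Icc 1 m, (Real.sqrt t)⁻¹ * ∑ k ∈ range m, lam^k * A k (m-t)
              = ∑ k ∈ range m, lam^k * ((Real.sqrt t)⁻¹ * A k (m-t)) := by
            intro t _
            rw [Finset.mul_sum]
            exact Finset.sum_congr rfl fun k _ => by ring
          rw [Finset.sum_congr rfl e1, Finset.sum_comm]
          have e2 : ∀ k ∈ range m, (∑ t ∈ Icc 1 m, lam^k * ((Real.sqrt t)⁻¹ * A k (m-t)))
              = lam^k * A (k+1) m := by
            intro k _
            rw [← Finset.mul_sum, ← A_succ]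
          rw [Finset.sum_congr rfl e2, Bb, Finset.sum_range_succ', Finset.mul_sum]
          have e3 : ∀ k ∈ range m, lam * (lam^k * A (k+1) m) = lam^(k+1) * A (k+1) m :=
            fun k _ => by ring
          rw [Finset.sum_congr rfl e3, pow_zero, A_zero, mul_one]
          ring

lemma half_sum (g : ℕ → ℝ) (hg : ∀ j, 0 ≤ g j) (n : ℕ) :
    ∑ k ∈ range n, g (k/2) ≤ 2 * ∑ j ∈ range n, g j := by
  have h2 : ∀ n, ∑ k ∈ range (2*n), g (k/2) = 2 * ∑ j ∈ range n, g j := by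
    intro n
    induction n with
    | zero => simp
    | succ n ih =>
      rw [show 2*(n+1) = (2*n+1)+1 from by ring, Finset.sum_range_succ, Finset.sum_range_succ, ih,
        Finset.sum_range_succ, show (2*n)/2 = n from by omega, show (2*n+1)/2 = n from by omega]
      ring
  calc ∑ k ∈ range n, g (k/2) ≤ ∑ k ∈ range (2*n), g (k/2) :=
        Finset.sum_le_sum_of_subset_of_nonneg
          (by intro x hx; simp only [Finset.mem_range] at *; omega)
          (fun k _ _ => hg _)
    _ = 2 * ∑ j ∈ range n, g j := h2 n

lemma Bb_le (lam : ℝ) (hlam : 0 ≤ lam) (m : ℕ) :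
    Bb lam m ≤ (1 + 2*lam*Real.sqrt m) * (2 * Real.exp (6*lam^2*m)) := by
  set x : ℝ := 6*lam^2*m with hx
  have hx0 : 0 ≤ x := by positivity
  have hfac : ∀ j : ℕ, (0:ℝ) < (Nat.factorial j : ℝ) := fun j => by positivity
  have hkey : ∀ k, lam^k * A k m
      ≤ (1 + 2*lam*Real.sqrt m) * (x^(k/2) / (Nat.factorial (k/2))) := by
    intro k
    have hsm : 0 ≤ 2*lam*Real.sqrt m := by positivity
    rcases Nat.even_or_odd k with ⟨j, hj⟩ | ⟨j, hj⟩
    · subst hj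
      have hdiv : (j+j)/2 = j := by omega
      rw [hdiv]
      have hA : A (j+j) m ≤ (6*(m:ℝ))^j / j.factorial := by
        have := A_even j m
        rwa [show 2*j = j+j from by ring] at this
      have hle : lam^(j+j) * A (j+j) m ≤ lam^(j+j) * ((6*(m:ℝ))^j / j.factorial) :=
        mul_le_mul_of_nonneg_left hA (pow_nonneg hlam _)
      have heq : lam^(j+j) * ((6*(m:ℝ))^j / j.factorial) = x^j / j.factorial := by
        rw [hx, show lam^(j+j) = (lam^2)^j from by rw [← pow_mul, two_mul],
          ← mul_div_assoc, ← mul_pow]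
        congr 2
        ring
      calc lam^(j+j) * A (j+j) m ≤ x^j / j.factorial := le_trans hle (le_of_eq heq)
        _ ≤ (1 + 2*lam*Real.sqrt m) * (x^j / j.factorial) :=
            le_mul_of_one_le_left (by positivity) (by linarith)
    · subst hj
      have hdiv : (2*j+1)/2 = j := by omega
      rw [hdiv]
      have hle : lam^(2*j+1) * A (2*j+1) m
          ≤ lam^(2*j+1) * (2*Real.sqrt m * ((6*(m:ℝ))^j / j.factorial)) :=
        mul_le_mul_of_nonneg_left (A_odd j m) (pow_nonneg hlam _)
      have heq : lam^(2*j+1) * (2*Real.sqrt m * ((6*(m:ℝ))^j / j.factorial))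
          = (2*lam*Real.sqrt m) * (x^j / j.factorial) := by
        rw [hx]
        have hne : ((Nat.factorial j : ℝ)) ≠ 0 := (hfac j).ne'
        field_simp
        ring
      calc lam^(2*j+1) * A (2*j+1) m ≤ (2*lam*Real.sqrt m) * (x^j / j.factorial) :=
            le_trans hle (le_of_eq heq)
        _ ≤ (1 + 2*lam*Real.sqrt m) * (x^j / j.factorial) :=
            mul_le_mul_of_nonneg_right (by linarith) (by positivity)
  calc Bb lam m = ∑ k ∈ range (m+1), lam^k * A k m := rfl
    _ ≤ ∑ k ∈ range (m+1), (1 + 2*lam*Real.sqrt m) * (x^(k/2) / (Nat.factorial (k/2))) :=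
        Finset.sum_le_sum fun k _ => hkey k
    _ = (1 + 2*lam*Real.sqrt m) * ∑ k ∈ range (m+1), x^(k/2) / (Nat.factorial (k/2)) := by
        rw [Finset.mul_sum]
    _ ≤ (1 + 2*lam*Real.sqrt m) * (2 * Real.exp x) := by
        apply mul_le_mul_of_nonneg_left _ (by positivity)
        calc ∑ k ∈ range (m+1), x^(k/2) / (Nat.factorial (k/2))
            ≤ 2 * ∑ j ∈ range (m+1), x^j / (Nat.factorial j) :=
              half_sum (fun j => x^j / (Nat.factorial j)) (fun j => by positivity) (m+1)
          _ ≤ 2 * Real.exp x := by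
              have := Real.sum_le_exp_of_nonneg hx0 (m+1)
              linarith

lemma pow_collisions (lam : ℝ) (m : ℕ) (ε η : Fin m → Bool) :
    (1+lam)^(collisions m ε η)
      = ∏ i ∈ Icc 1 m, (1 + if walkOf ε i = walkOf η i then lam else 0) := by
  rw [collisions, ← Finset.prod_const, Finset.prod_filter]
  exact Finset.prod_congr rfl fun i _ => by split_ifs <;> simp

end Coll

/-- For two independent simple random walks Y¹, Y² on ℤ started at 0 (realized here by
averaging uniformly over all ±1 step sequences), the exponential collision moments
E[(1 + β²N^{-1/2})^{#{1 ≤ i ≤ ⌊KN⌋ : Y¹ᵢ = Y²ᵢ}}] are bounded uniformly in N. -/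
theorem collision_exponential_moment_bounded (β K : ℝ) (hβ : 0 < β) (hK : 0 < K) :
    ∃ C : ℝ, ∀ N : ℕ, 1 ≤ N →
      (1 / (4 : ℝ) ^ (⌊K * (N : ℝ)⌋₊)) *
        ∑ ε : Fin ⌊K * (N : ℝ)⌋₊ → Bool, ∑ η : Fin ⌊K * (N : ℝ)⌋₊ → Bool,
          (1 + β ^ 2 * (N : ℝ) ^ (-(1/2) : ℝ)) ^ collisions (⌊K * (N : ℝ)⌋₊) ε η
      ≤ C := by
  classical
  refine ⟨(1 + 2*(β^2*Real.sqrt K)) * (2*Real.exp (6*(β^2*Real.sqrt K)^2)), ?_⟩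
  intro N hN
  set m := ⌊K * (N : ℝ)⌋₊ with hm
  set lam := β ^ 2 * (N : ℝ) ^ (-(1/2) : ℝ) with hlam
  have hNpos : (0:ℝ) < N := by exact_mod_cast Nat.lt_of_lt_of_le Nat.zero_lt_one hN
  have hl0 : 0 ≤ lam := by rw [hlam]; positivity
  have hid : (∑ ε : Fin m → Bool, ∑ η : Fin m → Bool, (1+lam)^(collisions m ε η))
      = Coll.S lam m := by
    rw [Finset.sum_congr rfl fun ε _ => Finset.sum_congr rfl fun η _ =>
      Coll.pow_collisions lam m ε η]
    rfl
  have hfloor : (m:ℝ) ≤ K*N := Nat.floor_le (by positivity)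
  have hrpow : (N:ℝ)^(-(1/2):ℝ) = (Real.sqrt N)⁻¹ := by
    rw [Real.rpow_neg hNpos.le, ← Real.sqrt_eq_rpow]
  have hsN : 0 < Real.sqrt N := Real.sqrt_pos.mpr hNpos
  have hms : lam * Real.sqrt m ≤ β^2 * Real.sqrt K := by
    rw [hlam, hrpow]
    have h1 : Real.sqrt m ≤ Real.sqrt K * Real.sqrt N := by
      rw [← Real.sqrt_mul hK.le]
      exact Real.sqrt_le_sqrt hfloor
    calc β^2 * (Real.sqrt N)⁻¹ * Real.sqrt m
        ≤ β^2 * (Real.sqrt N)⁻¹ * (Real.sqrt K * Real.sqrt N) := by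
          apply mul_le_mul_of_nonneg_left h1 (by positivity)
      _ = β^2 * Real.sqrt K * ((Real.sqrt N)⁻¹ * Real.sqrt N) := by ring
      _ = β^2 * Real.sqrt K := by rw [inv_mul_cancel₀ hsN.ne', mul_one]
  have hms2 : lam^2 * m ≤ (β^2*Real.sqrt K)^2 := by
    have he : (lam * Real.sqrt m)^2 = lam^2 * m := by
      rw [mul_pow, Real.sq_sqrt (Nat.cast_nonneg m)]
    rw [← he]
    exact pow_le_pow_left₀ (by positivity) hms 2
  have h1 : Coll.S lam m ≤ 4^m * Coll.Bb lam m := Coll.S_le lam hl0 m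
  have h2 : Coll.Bb lam m ≤ (1+2*lam*Real.sqrt m) * (2*Real.exp (6*lam^2*m)) :=
    Coll.Bb_le lam hl0 m
  have h3 : (1+2*lam*Real.sqrt m) * (2*Real.exp (6*lam^2*m))
      ≤ (1 + 2*(β^2*Real.sqrt K)) * (2*Real.exp (6*(β^2*Real.sqrt K)^2)) := by
    have hexp : Real.exp (6*lam^2*m) ≤ Real.exp (6*(β^2*Real.sqrt K)^2) :=
      Real.exp_le_exp.mpr (by nlinarith [hms2])
    have hsm0 : 0 ≤ lam * Real.sqrt m := by positivity
    apply mul_le_mul (by linarith) (by linarith) (by positivity) (by positivity)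
  have hS4 : Coll.S lam m
      ≤ 4^m * ((1 + 2*(β^2*Real.sqrt K)) * (2*Real.exp (6*(β^2*Real.sqrt K)^2))) :=
    le_trans h1 (mul_le_mul_of_nonneg_left (le_trans h2 h3) (by positivity))
  rw [hid]
  calc (1 / (4:ℝ)^m) * Coll.S lam m
      ≤ (1 / (4:ℝ)^m) *
        (4^m * ((1 + 2*(β^2*Real.sqrt K)) * (2*Real.exp (6*(β^2*Real.sqrt K)^2)))) := by
        apply mul_le_mul_of_nonneg_left hS4 (by positivity)
    _ = (1 + 2*(β^2*Real.sqrt K)) * (2*Real.exp (6*(β^2*Real.sqrt K)^2)) := by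
        have : ((4:ℝ)^m) ≠ 0 := by positivity
        field_simp
end
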